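/- For c ≥ 2, every solution of the linear system V' = V_z, V_z' = −c V_z − V starting in the region {V > 0, −(c/2)V ≤ V_z ≤ 0} remains in the closed fourth quadrant {V ≥ 0, V_z ≤ 0} for all forward time and converges to the origin as z → ∞. -/

import Mathlib

open Real Filter

private lemma aux_const {f : ℝ → ℝ} (hf : ∀ z, HasDerivAt f 0 z) : ∀ z, f z = f 0 :=
  fun z => is_const_of_deriv_eq_zero (fun x => (hf x).differentiableAt)
    (fun x => (hf x).deriv) z 0

private lemma aux_mono {f f' : ℝ → ℝ} (hf : ∀ z, HasDerivAt f (f' z) z)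
    (h : ∀ z, 0 ≤ z → 0 ≤ f' z) {z : ℝ} (hz : 0 ≤ z) : f 0 ≤ f z := by
  have := monotoneOn_of_deriv_nonneg (convex_Ici (0:ℝ))
    (fun x _ => (hf x).continuousAt.continuousWithinAt)
    (fun x _ => (hf x).differentiableAt.differentiableWithinAt)
    (fun x hx => by
      rw [(hf x).deriv]
      exact h x (le_of_lt (by simpa [interior_Ici] using hx)))
  exact this (Set.self_mem_Ici) hz hz

set_option maxHeartbeats 1000000 in
/-- For `c ≥ 2`, every solution of `V' = V_z`, `V_z' = −cV_z − V` starting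
in `{V > 0, −(c/2)V ≤ V_z ≤ 0}` remains in the closed fourth quadrant for all forward
time and converges to the origin. -/
theorem linear_system_forward_invariance_and_convergence (c : ℝ) (hc : 2 ≤ c)
    (V Vz : ℝ → ℝ)
    (hV : ∀ z, HasDerivAt V (Vz z) z)
    (hVz : ∀ z, HasDerivAt Vz (-c * Vz z - V z) z)
    (h0 : 0 < V 0) (h1 : -(c / 2) * V 0 ≤ Vz 0) (h2 : Vz 0 ≤ 0) :
    (∀ z, 0 ≤ z → 0 ≤ V z ∧ Vz z ≤ 0) ∧
    Filter.Tendsto (fun z => (V z, Vz z)) Filter.atTop (nhds (0, 0)) := by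
  set m : ℝ := c / 2 with hm
  have hm1 : 1 ≤ m := by simp [hm]; linarith
  have hcm : c = 2 * m := by rw [hm]; ring
  set k : ℝ := Real.sqrt (m ^ 2 - 1) with hk
  have hk0 : 0 ≤ k := Real.sqrt_nonneg _
  have hk2 : k ^ 2 = m ^ 2 - 1 := Real.sq_sqrt (by nlinarith)
  have hkm : k < m := by
    nlinarith [hk2, hk0]
  -- basic derivative of exp of linear function
  have hexp : ∀ (a z : ℝ), HasDerivAt (fun z => Real.exp (a * z)) (a * Real.exp (a * z)) z := by
    intro a z
    simpa [mul_comm] using (((hasDerivAt_id z).const_mul a).exp)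
  set u : ℝ → ℝ := fun z => Real.exp (m * z) * V z with hu
  set w : ℝ → ℝ := fun z => Real.exp (m * z) * (Vz z + m * V z) with hw
  have hud : ∀ z, HasDerivAt u (w z) z := by
    intro z
    have := (hexp m z).mul (hV z)
    refine HasDerivAt.congr_deriv this ?_
    simp [hw]; ring
  have hwd : ∀ z, HasDerivAt w (k ^ 2 * u z) z := by
    intro z
    have := (hexp m z).mul ((hVz z).add ((hV z).const_mul m))
    refine HasDerivAt.congr_deriv this ?_
    rw [hk2]
    simp [hu, hcm]; ring
  -- q and p: eigen-combinations
  set q : ℝ → ℝ := fun z => w z + k * u z with hq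
  set p : ℝ → ℝ := fun z => w z - k * u z with hp
  have hqd : ∀ z, HasDerivAt q (k * q z) z := by
    intro z
    have := (hwd z).add ((hud z).const_mul k)
    refine HasDerivAt.congr_deriv this ?_
    simp [hq]; ring
  have hpd : ∀ z, HasDerivAt p (-k * p z) z := by
    intro z
    have := (hwd z).sub ((hud z).const_mul k)
    refine HasDerivAt.congr_deriv this ?_
    simp [hp]; ring
  -- explicit formulas for q and p
  have hqf : ∀ z, q z = q 0 * Real.exp (k * z) := by
    have : ∀ z, Real.exp (-k * z) * q z = Real.exp (-k * 0) * q 0 :=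
      aux_const (f := fun z => Real.exp (-k * z) * q z) (fun z => by
        have := (hexp (-k) z).mul (hqd z)
        refine HasDerivAt.congr_deriv this ?_
        ring)
    intro z
    have h := this z
    have he : Real.exp (k * z) * Real.exp (-k * z) = 1 := by
      rw [← Real.exp_add]; ring_nf; exact Real.exp_zero
    calc q z = Real.exp (k * z) * (Real.exp (-k * z) * q z) := by
            rw [← mul_assoc, he, one_mul]
      _ = Real.exp (k * z) * (Real.exp (-k * 0) * q 0) := by rw [h]
      _ = q 0 * Real.exp (k * z) := by simp [mul_comm]
  have hpf : ∀ z, p z = p 0 * Real.exp (-k * z) := by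
    have : ∀ z, Real.exp (k * z) * p z = Real.exp (k * 0) * p 0 :=
      aux_const (f := fun z => Real.exp (k * z) * p z) (fun z => by
        have := (hexp k z).mul (hpd z)
        refine HasDerivAt.congr_deriv this ?_
        ring)
    intro z
    have h := this z
    have he : Real.exp (-k * z) * Real.exp (k * z) = 1 := by
      rw [← Real.exp_add]; ring_nf; exact Real.exp_zero
    calc p z = Real.exp (-k * z) * (Real.exp (k * z) * p z) := by
            rw [← mul_assoc, he, one_mul]
      _ = Real.exp (-k * z) * (Real.exp (k * 0) * p 0) := by rw [h]
      _ = p 0 * Real.exp (-k * z) := by simp [mul_comm]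
  have hu0 : u 0 = V 0 := by simp [hu]
  have hw0 : w 0 = Vz 0 + m * V 0 := by simp [hw]
  have hw0n : 0 ≤ w 0 := by rw [hw0]; linarith
  have hq0 : 0 ≤ q 0 := by
    simp only [hq]
    have : 0 ≤ k * u 0 := by rw [hu0]; positivity
    linarith
  -- w ≥ 0 on [0, ∞)
  have hwpos : ∀ z, 0 ≤ z → 0 ≤ w z := by
    intro z hz
    have h2w : 2 * w z = p 0 * Real.exp (-k * z) + q 0 * Real.exp (k * z) := by
      rw [← hpf z, ← hqf z]; simp [hp, hq]; ring
    have hee : Real.exp (-k * z) ≤ Real.exp (k * z) := by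
      apply Real.exp_le_exp.2; nlinarith
    have hpq : p 0 + q 0 = 2 * w 0 := by simp [hp, hq]; ring
    rcases le_or_gt 0 (p 0) with hp0 | hp0
    · nlinarith [Real.exp_pos (-k * z), Real.exp_pos (k * z)]
    · nlinarith [Real.exp_pos (-k * z), Real.exp_pos (k * z)]
  -- A = e^{kz} u is monotone, lower bound on u
  set A : ℝ → ℝ := fun z => Real.exp (k * z) * u z with hA
  have hAd : ∀ z, HasDerivAt A (q 0 * Real.exp (2 * k * z)) z := by
    intro z
    have := (hexp k z).mul (hud z)
    refine HasDerivAt.congr_deriv this ?_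
    have : Real.exp (k * z) * q z = q 0 * Real.exp (2 * k * z) := by
      rw [hqf z, mul_comm (q 0), ← mul_assoc, ← Real.exp_add]
      rw [mul_comm]
      congr 1
      ring
    rw [← this]; simp [hq]; ring
  have hAlow : ∀ z, 0 ≤ z → u 0 ≤ A z := by
    intro z hz
    have := aux_mono hAd (fun z _ => by positivity) hz
    simpa [hA] using this
  have hupos : ∀ z, 0 ≤ z → 0 < u z := by
    intro z hz
    have h := hAlow z hz
    rw [hu0] at h
    simp only [hA] at h
    nlinarith [Real.exp_pos (k * z)]
  have hVpos : ∀ z, 0 ≤ z → 0 ≤ V z := by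
    intro z hz
    have := hupos z hz
    simp only [hu] at this
    nlinarith [Real.exp_pos (m * z)]
  -- upper bound on A: A z ≤ u 0 + q 0 * z * e^{2kz}
  have hAup : ∀ z, 0 ≤ z → A z ≤ u 0 + q 0 * (z * Real.exp (2 * k * z)) := by
    intro z hz
    set B : ℝ → ℝ := fun z => u 0 + q 0 * (z * Real.exp (2 * k * z)) - A z with hB
    have hBd : ∀ z, HasDerivAt B (q 0 * (z * (2 * k * Real.exp (2 * k * z)))) z := by
      intro z
      have hzd : HasDerivAt (fun z => z * Real.exp (2 * k * z))
          (1 * Real.exp (2 * k * z) + z * (2 * k * Real.exp (2 * k * z))) z :=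
        (hasDerivAt_id z).mul (hexp (2 * k) z)
      have := ((hzd.const_mul (q 0)).const_add (u 0)).sub (hAd z)
      refine HasDerivAt.congr_deriv this ?_
      ring
    have hmono := aux_mono hBd (fun z hz => by positivity) hz
    have hB0 : B 0 = 0 := by simp [hB, hA]
    rw [hB0] at hmono
    simp only [hB] at hmono
    linarith
  -- h := m u - w ≥ 0 on [0,∞), giving Vz ≤ 0
  have hhd : ∀ z, HasDerivAt (fun z => Real.exp (m * z) * (m * u z - w z)) (Real.exp (m * z) * u z) z := by
    intro z
    have := (hexp m z).mul (((hud z).const_mul m).sub (hwd z))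
    refine HasDerivAt.congr_deriv this ?_
    rw [hk2, Pi.sub_apply]; ring
  have hhpos : ∀ z, 0 ≤ z → 0 ≤ m * u z - w z := by
    intro z hz
    have hmono := aux_mono hhd (fun z hz => by
      have := hupos z hz
      positivity) hz
    have h00 : Real.exp (m * 0) * (m * u 0 - w 0) = -Vz 0 := by
      rw [hu0, hw0]; simp
    rw [h00] at hmono
    nlinarith [Real.exp_pos (m * z), h2]
  have hVzneg : ∀ z, 0 ≤ z → Vz z ≤ 0 := by
    intro z hz
    have h := hhpos z hz
    simp only [hu, hw] at h
    nlinarith [Real.exp_pos (m * z), h]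
  refine ⟨fun z hz => ⟨hVpos z hz, hVzneg z hz⟩, ?_⟩
  -- convergence
  have hVbound : ∀ z, 0 ≤ z →
      V z ≤ u 0 * Real.exp (-((m + k) * z)) + q 0 * (z * Real.exp ((k - m) * z)) := by
    intro z hz
    have h := hAup z hz
    have hone : Real.exp (-((m + k) * z)) * (Real.exp (k * z) * Real.exp (m * z)) = 1 := by
      rw [← Real.exp_add, ← Real.exp_add]; ring_nf; exact Real.exp_zero
    have hVA : V z = Real.exp (-((m + k) * z)) * A z := by
      simp only [hA, hu]
      calc V z = (Real.exp (-((m + k) * z)) * (Real.exp (k * z) * Real.exp (m * z))) * V z := by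
            rw [hone, one_mul]
        _ = Real.exp (-((m + k) * z)) * (Real.exp (k * z) * (Real.exp (m * z) * V z)) := by ring
    rw [hVA]
    have := mul_le_mul_of_nonneg_left h (le_of_lt (Real.exp_pos (-((m + k) * z))))
    calc Real.exp (-((m + k) * z)) * A z
        ≤ Real.exp (-((m + k) * z)) * (u 0 + q 0 * (z * Real.exp (2 * k * z))) := this
      _ = u 0 * Real.exp (-((m + k) * z)) + q 0 * (z * (Real.exp (-((m + k) * z)) * Real.exp (2 * k * z))) := by ring
      _ = u 0 * Real.exp (-((m + k) * z)) + q 0 * (z * Real.exp ((k - m) * z)) := by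
          rw [← Real.exp_add]; ring_nf
  have hmk : 0 < m + k := by linarith
  have hmk2 : 0 < m - k := by linarith
  have T1 : Tendsto (fun z => u 0 * Real.exp (-((m + k) * z))) atTop (nhds 0) := by
    have : Tendsto (fun z : ℝ => (m + k) * z) atTop atTop :=
      Tendsto.const_mul_atTop hmk tendsto_id
    have := (Real.tendsto_exp_atBot).comp (tendsto_neg_atTop_atBot.comp this)
    have h2 := this.const_mul (u 0)
    simpa using h2
  have T2 : Tendsto (fun z => q 0 * (z * Real.exp ((k - m) * z))) atTop (nhds 0) := by
    have hcomp : Tendsto (fun z : ℝ => (m - k) * z) atTop atTop :=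
      Tendsto.const_mul_atTop hmk2 tendsto_id
    have := (Real.tendsto_pow_mul_exp_neg_atTop_nhds_zero 1).comp hcomp
    have h3 : Tendsto (fun z : ℝ => ((m - k) * z) * Real.exp (-((m - k) * z))) atTop (nhds 0) := by
      simpa [Function.comp_def] using this
    have h4 := h3.const_mul (q 0 / (m - k))
    simp only [mul_zero] at h4
    apply h4.congr'
    filter_upwards with z
    field_simp
    ring_nf
  have hVtend : Tendsto V atTop (nhds 0) := by
    have hTsum : Tendsto (fun z => u 0 * Real.exp (-((m + k) * z)) + q 0 * (z * Real.exp ((k - m) * z))) atTop (nhds 0) := by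
      simpa using T1.add T2
    apply tendsto_of_tendsto_of_tendsto_of_le_of_le' tendsto_const_nhds hTsum
    · filter_upwards [eventually_ge_atTop (0:ℝ)] with z hz using hVpos z hz
    · filter_upwards [eventually_ge_atTop (0:ℝ)] with z hz using hVbound z hz
  have hVzlow : ∀ z, 0 ≤ z → -m * V z ≤ Vz z := by
    intro z hz
    have h := hwpos z hz
    simp only [hw] at h
    nlinarith [Real.exp_pos (m * z)]
  have hVztend : Tendsto Vz atTop (nhds 0) := by
    have hlow : Tendsto (fun z => -m * V z) atTop (nhds 0) := by
      have := hVtend.const_mul (-m)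
      simpa using this
    apply tendsto_of_tendsto_of_tendsto_of_le_of_le' hlow tendsto_const_nhds
    · filter_upwards [eventually_ge_atTop (0:ℝ)] with z hz using hVzlow z hz
    · filter_upwards [eventually_ge_atTop (0:ℝ)] with z hz using hVzneg z hz
  exact hVtend.prodMk_nhds hVztend
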